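/- Let A be a unital C*-algebra, u = (e_{x,a})_{x,a ∈ Fin n} a quantum permutation over A, and A' = (a_{i,j}) ∈ M_n(ℂ). If (A' ⊗ 1) u = u (A' ⊗ 1) in M_n(A), then for all i, j, k, l with e_{i,k} e_{j,l} ≠ 0 we have a_{i,j} = a_{k,l}. -/
import Mathlib

open Matrix in
/-- Converse direction: if `(A'⊗1)u = u(A'⊗1)` for a quantum permutation `u = (e_{x,a})`,
then `a_{i,j} = a_{k,l}` whenever `e_{i,k} e_{j,l} ≠ 0`. -/
theorem commuting_matrix_entries_constant
    {A : Type*} [NormedRing A] [StarRing A] [CStarRing A] [NormedAlgebra ℂ A]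
    [StarModule ℂ A] [CompleteSpace A]
    {n : ℕ} (e : Fin n → Fin n → A)
    (hidem : ∀ x a, e x a * e x a = e x a)
    (hsa : ∀ x a, star (e x a) = e x a)
    (hrow : ∀ x, ∑ a, e x a = 1)
    (hcol : ∀ a, ∑ x, e x a = 1)
    (u : Matrix (Fin n) (Fin n) A) (hu : u = Matrix.of e)
    (A' : Matrix (Fin n) (Fin n) ℂ)
    (hcomm : A'.map (algebraMap ℂ A) * u = u * A'.map (algebraMap ℂ A)) :
    ∀ i j k l, e i k * e j l ≠ 0 → A' i j = A' k l := by
  letI : CStarAlgebra A := ⟨⟩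
  letI := CStarAlgebra.spectralOrder A
  letI := CStarAlgebra.spectralOrderedRing A
  -- orthogonality from a family of projections summing to 1
  have key : ∀ (p : Fin n → A), (∀ c, p c * p c = p c) → (∀ c, star (p c) = p c) →
      (∑ c, p c = 1) → ∀ a b, a ≠ b → p a * p b = 0 := by
    intro p hp hps hsum a b hab
    have key2 : ∀ c, star (p c * p a) * (p c * p a) = p a * p c * p a := by
      intro c
      rw [StarMul.star_mul, hps, hps]
      calc p a * p c * (p c * p a) = p a * (p c * p c) * p a := by
            simp only [mul_assoc]
        _ = p a * p c * p a := by rw [hp]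
    have hsum2 : ∑ c, p a * p c * p a = p a := by
      rw [show (∑ c, p a * p c * p a) = p a * (∑ c, p c) * p a from by
        rw [Finset.mul_sum, Finset.sum_mul], hsum, mul_one, hp]
    rw [← Finset.add_sum_erase _ _ (Finset.mem_univ a)] at hsum2
    have haaa : p a * p a * p a = p a := by rw [hp, hp]
    rw [haaa] at hsum2
    have hz : ∑ c ∈ Finset.univ.erase a, p a * p c * p a = 0 :=
      add_eq_left.mp hsum2
    have hnn : ∀ c ∈ Finset.univ.erase a, 0 ≤ p a * p c * p a := by
      intro c _
      rw [← key2]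
      exact star_mul_self_nonneg _
    have hb := (Finset.sum_eq_zero_iff_of_nonneg hnn).mp hz b
      (Finset.mem_erase.mpr ⟨hab.symm, Finset.mem_univ b⟩)
    have h0 : p b * p a = 0 := by
      refine (CStarRing.star_mul_self_eq_zero_iff _).mp ?_
      rw [key2]; exact hb
    calc p a * p b = star (p b * p a) := by rw [StarMul.star_mul, hps, hps]
      _ = 0 := by rw [h0, star_zero]
  have orow : ∀ x a b, a ≠ b → e x a * e x b = 0 := fun x a b hab =>
    key (e x) (hidem x) (hsa x) (hrow x) a b hab
  have ocol : ∀ a x y, x ≠ y → e x a * e y a = 0 := fun a x y hxy =>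
    key (fun x => e x a) (fun x => hidem x a) (fun x => hsa x a) (hcol a) x y hxy
  intro i j k l hne
  have hentry := congrFun (congrFun hcomm i) l
  simp only [Matrix.mul_apply, Matrix.map_apply, hu, Matrix.of_apply,
    ← Algebra.commutes, ← Algebra.smul_def] at hentry
  -- hentry : ∑ x, A' i x • e x l = ∑ x, A' x l • e i x
  have hmul := congrArg (fun z => e i k * z * e j l) hentry
  simp only [Finset.mul_sum, Finset.sum_mul, mul_smul_comm, smul_mul_assoc] at hmul
  have hL : ∑ x, A' i x • (e i k * e x l * e j l) = A' i j • (e i k * e j l) := by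
    rw [Finset.sum_eq_single j]
    · rw [mul_assoc, hidem]
    · intro x _ hx
      rw [mul_assoc, ocol l x j hx, mul_zero, smul_zero]
    · intro h; exact absurd (Finset.mem_univ j) h
  have hR : ∑ x, A' x l • (e i k * e i x * e j l) = A' k l • (e i k * e j l) := by
    rw [Finset.sum_eq_single k]
    · rw [hidem]
    · intro x _ hx
      rw [orow i k x (fun h => hx h.symm), zero_mul, smul_zero]
    · intro h; exact absurd (Finset.mem_univ k) h
  rw [hL, hR] at hmul
  have hsub : (A' i j - A' k l) • (e i k * e j l) = 0 := by
    rw [sub_smul, hmul, sub_self]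
  rcases smul_eq_zero.mp hsub with h | h
  · exact sub_eq_zero.mp h
  · exact absurd h hne
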